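/- arXiv:2207.02551 — 3 statements merged into one kernel-verified Lean document; each statement's English description precedes it below -/
import Mathlib

section
/- Let (a,b)=(Ψ_{2^{m−2}−1}(G₁),Ψ_{2^{m−2}−1}(G₂)) and (c,d)=(Ψ_{2^{m−2}−1}(G₁+(q/2)x_{m−2}),Ψ_{2^{m−2}−1}(G₂+(q/2)x_{m−2})) as in the paper's construction. Then C(a,c)(τ)+C(b,d)(τ)=0 for every shift τ. -/
open Finset Complex

/-- ω = exp(2πi/q). -/
noncomputable def omegaq (q : ℕ) : ℂ := Complex.exp (2 * Real.pi * Complex.I / q)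

/-- Aperiodic cross-correlation of two length-`N` complex sequences at shift `τ`. -/
noncomputable def acorr (N : ℕ) (x y : ℕ → ℂ) (τ : ℕ) : ℂ :=
  ∑ i ∈ Finset.range (N - τ), x i * (starRingEnd ℂ) (y (i + τ))

/-- `k`-th binary digit of `i`. -/
def bit (i k : ℕ) : ℕ := (i / 2 ^ k) % 2

/-- exponent of the first sequence (divided by q/2, modulo the constant c). -/
def K1 (m : ℕ) (π : ℕ → ℕ) (g : ℕ → ℕ) (i : ℕ) : ℕ :=
  (1 - bit i (m-1)) * bit i (m-2) * g i
  + bit i (m-1) * (1 - bit i (m-2)) * (g i + bit i (π 0) + (m-2))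
  + bit i (m-1) * bit i (m-2)

/-- exponent of the second sequence. -/
def K2 (m : ℕ) (π : ℕ → ℕ) (g : ℕ → ℕ) (i : ℕ) : ℕ :=
  (1 - bit i (m-1)) * bit i (m-2) * g i
  + bit i (m-1) * (1 - bit i (m-2)) * (g i + bit i (π 0) + (m-2))
  + bit i (π (m-3)) * (bit i (m-1) + bit i (m-2))

lemma bit01 (i k : ℕ) : bit i k = 0 ∨ bit i k = 1 :=
  Nat.mod_two_eq_zero_or_one _

/-- complementary indices have complementary bits -/
lemma bitc : ∀ (k m u v : ℕ), k < m → u + v = 2 ^ m - 1 → bit u k + bit v k = 1 := by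
  intro k
  induction k with
  | zero =>
    intro m u v hk huv
    have h2 : 2 ^ m = 2 * 2 ^ (m - 1) := by
      rw [← pow_succ']; congr 1; omega
    have h0 : 1 ≤ 2 ^ (m - 1) := Nat.one_le_two_pow
    rw [h2] at huv
    simp only [bit, pow_zero, Nat.div_one]
    generalize (2 : ℕ) ^ (m - 1) = t at huv h0
    omega
  | succ k ih =>
    intro m u v hk huv
    have hb : ∀ w : ℕ, bit w (k+1) = bit (w / 2) k := by
      intro w
      simp only [bit]
      rw [Nat.div_div_eq_div_mul, ← pow_succ']
    rw [hb u, hb v]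
    have h2 : 2 ^ m = 2 * 2 ^ (m - 1) := by
      rw [← pow_succ']; congr 1; omega
    rw [h2] at huv
    have h0 : 1 ≤ 2 ^ (m - 1) := Nat.one_le_two_pow
    apply ih (m - 1) (u / 2) (v / 2) (by omega)
    generalize (2 : ℕ) ^ (m - 1) = t at huv h0 ⊢
    omega

lemma zmod2_of_mod (n : ℕ) (h : (n : ZMod 2) = 1) : n % 2 = 1 := by
  rcases Nat.even_or_odd n with he | ho
  · exfalso
    obtain ⟨t, ht⟩ := he
    rw [ht] at h
    push_cast at h
    have : (2 : ZMod 2) = 0 := by decide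
    rw [show ((t : ZMod 2) + t) = 2 * t by ring, this, zero_mul] at h
    exact one_ne_zero h.symm
  · exact Nat.odd_iff.mp ho

lemma telesum (n : ℕ) (f : ℕ → ZMod 2) :
    (∑ k ∈ Finset.range n, f k) + ∑ k ∈ Finset.range n, f (k + 1) = f 0 + f n := by
  have h2 : ∀ x : ZMod 2, x + x = 0 := by decide
  induction n with
  | zero => simpa using (h2 (f 0)).symm
  | succ n ih =>
    rw [Finset.sum_range_succ, Finset.sum_range_succ]
    calc (∑ k ∈ Finset.range n, f k + f n) + (∑ k ∈ Finset.range n, f (k+1) + f (n+1))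
        = ((∑ k ∈ Finset.range n, f k) + ∑ k ∈ Finset.range n, f (k+1)) + f n + f (n+1) := by
          ring
      _ = (f 0 + f (n + 1)) + (f n + f n) := by rw [ih]; ring
      _ = f 0 + f (n + 1) := by rw [h2 (f n), add_zero]

/-- THE core parity identity. -/
lemma core (m : ℕ) (hm : 4 ≤ m) (π : ℕ → ℕ) (hπ : ∀ k, k < m - 2 → π k < m - 2)
    (g : ℕ → ℕ)
    (hg : ∀ i, g i = ∑ k ∈ Finset.range (m - 3), bit i (π k) * bit i (π (k + 1)))
    (u v : ℕ) (huv : u + v = 2 ^ m - 1) :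
    (K1 m π g u + K2 m π g v + bit v (m-2)) % 2 = 1 := by
  -- complement facts for the relevant positions
  have hπm : ∀ k, k < m - 2 → π k < m := fun k hk => lt_of_lt_of_le (hπ k hk) (by omega)
  have cb : ∀ k, k < m → ((bit v k : ZMod 2)) = 1 + (bit u k : ZMod 2) := by
    intro k hk
    have := bitc k m u v hk huv
    have h01 := bit01 u k
    have h01' := bit01 v k
    rcases h01 with h | h <;> rcases h01' with h' | h' <;>
      rw [h, h'] <;> first | omega | decide
  -- g complement
  have hgv : ((g v : ℕ) : ZMod 2)
      = (g u : ZMod 2) + ((m - 3 : ℕ) : ZMod 2) + (bit u (π 0) : ZMod 2)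
        + (bit u (π (m-3)) : ZMod 2) := by
    have e1 : ((g v : ℕ) : ZMod 2)
        = ∑ k ∈ Finset.range (m - 3), ((bit v (π k) : ZMod 2) * (bit v (π (k+1)) : ZMod 2)) := by
      rw [hg v]; push_cast; rfl
    have e2 : ((g u : ℕ) : ZMod 2)
        = ∑ k ∈ Finset.range (m - 3), ((bit u (π k) : ZMod 2) * (bit u (π (k+1)) : ZMod 2)) := by
      rw [hg u]; push_cast; rfl
    have hterm : ∀ k ∈ Finset.range (m - 3),
        ((bit v (π k) : ZMod 2) * (bit v (π (k+1)) : ZMod 2))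
          = 1 + (bit u (π k) : ZMod 2) + (bit u (π (k+1)) : ZMod 2)
            + (bit u (π k) : ZMod 2) * (bit u (π (k+1)) : ZMod 2) := by
      intro k hk
      have hk' := Finset.mem_range.mp hk
      rw [cb (π k) (hπm k (by omega)), cb (π (k+1)) (hπm (k+1) (by omega))]
      ring
    rw [e1, Finset.sum_congr rfl hterm]
    have hsplit : ∑ k ∈ Finset.range (m - 3),
        (1 + (bit u (π k) : ZMod 2) + (bit u (π (k+1)) : ZMod 2)
          + (bit u (π k) : ZMod 2) * (bit u (π (k+1)) : ZMod 2))
        = (m - 3 : ℕ) + ((∑ k ∈ Finset.range (m - 3), (bit u (π k) : ZMod 2))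
            + ∑ k ∈ Finset.range (m - 3), (bit u (π (k+1)) : ZMod 2))
          + ∑ k ∈ Finset.range (m - 3), (bit u (π k) : ZMod 2) * (bit u (π (k+1)) : ZMod 2) := by
      rw [Finset.sum_add_distrib, Finset.sum_add_distrib, Finset.sum_add_distrib]
      simp [add_assoc, add_comm, add_left_comm]
    rw [hsplit, telesum (m - 3) (fun k => (bit u (π k) : ZMod 2)), ← e2]
    ring
  -- now reduce to a ZMod 2 computation
  apply zmod2_of_mod
  simp only [K1, K2]
  have hsub : ∀ (w k : ℕ), ((1 - bit w k : ℕ) : ZMod 2) = 1 + (bit w k : ZMod 2) := by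
    intro w k
    rcases bit01 w k with h | h <;> rw [h] <;> decide
  have hm2 : ((m - 2 : ℕ) : ZMod 2) = ((m - 3 : ℕ) : ZMod 2) + 1 := by
    rw [show m - 2 = (m - 3) + 1 by omega]; push_cast; ring
  push_cast
  rw [hsub u, hsub v, hsub u (m-2), hsub v (m-2)]
  rw [cb (m-1) (by omega), cb (m-2) (by omega),
      cb (π 0) (hπm 0 (by omega)), cb (π (m-3)) (hπm (m-3) (by omega)), hgv, hm2]
  generalize (bit u (m-1) : ZMod 2) = x
  generalize (bit u (m-2) : ZMod 2) = y
  generalize (bit u (π 0) : ZMod 2) = p0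
  generalize (bit u (π (m-3)) : ZMod 2) = p
  generalize ((g u : ℕ) : ZMod 2) = a
  generalize ((m - 3 : ℕ) : ZMod 2) = b
  revert x y p0 p a b
  decide

lemma sign_cancel (a b : ℕ) (h : (a + b) % 2 = 1) : ((-1 : ℂ)) ^ a + (-1) ^ b = 0 := by
  have h2 : a % 2 = 0 ∧ b % 2 = 1 ∨ a % 2 = 1 ∧ b % 2 = 0 := by omega
  rcases h2 with ⟨ha, hb⟩ | ⟨ha, hb⟩
  · rw [(Nat.even_iff.mpr ha).neg_one_pow, (Nat.odd_iff.mpr hb).neg_one_pow]; ring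
  · rw [(Nat.odd_iff.mpr ha).neg_one_pow, (Nat.even_iff.mpr hb).neg_one_pow]; ring

/-- Lemma 4, eqn (12): C(a,c)(τ) + C(b,d)(τ) = 0 for every shift τ
(positive shifts, and the swapped version covering negative shifts). -/
theorem stmt_7 (q m c : ℕ) (hq : 2 ≤ q) (hq2 : 2 ∣ q) (hm : 4 ≤ m)
    (π : ℕ → ℕ) (hπ : Set.BijOn π (Set.Iio (m - 2)) (Set.Iio (m - 2)))
    (g G G₁ G₂ : ℕ → ℕ)
    (hg : ∀ i, g i = ∑ k ∈ Finset.range (m - 3), bit i (π k) * bit i (π (k + 1)))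
    (hG : ∀ i, G i = q / 2 * ((1 - bit i (m - 1)) * bit i (m - 2) * g i
        + bit i (m - 1) * (1 - bit i (m - 2)) * (g i + bit i (π 0) + (m - 2))) + c)
    (hG₁ : ∀ i, G₁ i = G i + q / 2 * (bit i (m - 1) * bit i (m - 2)))
    (hG₂ : ∀ i, G₂ i = G i + q / 2 * (bit i (π (m - 3)) * (bit i (m - 1) + bit i (m - 2))))
    (a b cs ds : ℕ → ℂ)
    (ha : ∀ i, a i = omegaq q ^ G₁ (i + (2 ^ (m - 2) - 1)))
    (hb : ∀ i, b i = omegaq q ^ G₂ (i + (2 ^ (m - 2) - 1)))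
    (hcs : ∀ i, cs i = omegaq q ^ (G₁ (i + (2 ^ (m - 2) - 1))
        + q / 2 * bit (i + (2 ^ (m - 2) - 1)) (m - 2)))
    (hds : ∀ i, ds i = omegaq q ^ (G₂ (i + (2 ^ (m - 2) - 1))
        + q / 2 * bit (i + (2 ^ (m - 2) - 1)) (m - 2))) :
    ∀ τ : ℕ,
      acorr (2 ^ (m - 1) + 2) a cs τ + acorr (2 ^ (m - 1) + 2) b ds τ = 0 ∧
      acorr (2 ^ (m - 1) + 2) cs a τ + acorr (2 ^ (m - 1) + 2) ds b τ = 0 := by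
  have hπ' : ∀ k, k < m - 2 → π k < m - 2 := fun k hk => hπ.mapsTo hk
  obtain ⟨r, hr⟩ := hq2
  -- ω^(q/2) = -1
  have hω : omegaq q ^ (q / 2) = -1 := by
    rw [omegaq, ← Complex.exp_nat_mul]
    have hq2' : q / 2 = r := by omega
    have hrC : (r : ℂ) ≠ 0 := Nat.cast_ne_zero.mpr (by omega)
    have hqC : (q : ℂ) = 2 * r := by rw [hr]; push_cast; ring
    have harg : ((q / 2 : ℕ) : ℂ) * (2 * Real.pi * Complex.I / q) = Real.pi * Complex.I := by
      rw [hq2', hqC]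
      field_simp
    rw [harg, Complex.exp_pi_mul_I]
  -- z * conj z = 1 where z = ω^c
  have hz : omegaq q ^ c * (starRingEnd ℂ) (omegaq q ^ c) = 1 := by
    rw [map_pow, ← mul_pow]
    have h1 : omegaq q * (starRingEnd ℂ) (omegaq q) = 1 := by
      rw [omegaq, ← Complex.exp_conj, ← Complex.exp_add]
      have : 2 * (Real.pi : ℂ) * Complex.I / q
          + (starRingEnd ℂ) (2 * (Real.pi : ℂ) * Complex.I / q) = 0 := by
        simp [map_div₀, map_mul, Complex.conj_I, Complex.conj_ofReal, map_ofNat]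
        ring
      rw [this, Complex.exp_zero]
    rw [h1, one_pow]
  have val : ∀ k : ℕ, omegaq q ^ (q / 2 * k + c) = (-1 : ℂ) ^ k * omegaq q ^ c := by
    intro k
    rw [pow_add, pow_mul, hω]
  -- exponent decompositions
  have e1 : ∀ i, G₁ i = q / 2 * K1 m π g i + c := by
    intro i; rw [hG₁, hG, K1]; ring
  have e2 : ∀ i, G₂ i = q / 2 * K2 m π g i + c := by
    intro i; rw [hG₂, hG, K2]; ring
  set L : ℕ := 2 ^ (m - 2) - 1 with hL
  -- values
  have va : ∀ t, a t = (-1 : ℂ) ^ (K1 m π g (t + L)) * omegaq q ^ c := by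
    intro t; rw [ha t, e1 (t + L)]; exact val _
  have vb : ∀ t, b t = (-1 : ℂ) ^ (K2 m π g (t + L)) * omegaq q ^ c := by
    intro t; rw [hb t, e2 (t + L)]; exact val _
  have vcs : ∀ t, cs t = (-1 : ℂ) ^ (K1 m π g (t + L) + bit (t + L) (m-2)) * omegaq q ^ c := by
    intro t
    rw [hcs t, show G₁ (t + L) + q / 2 * bit (t + L) (m - 2)
        = q / 2 * (K1 m π g (t + L) + bit (t + L) (m-2)) + c by rw [e1]; ring]
    exact val _
  have vds : ∀ t, ds t = (-1 : ℂ) ^ (K2 m π g (t + L) + bit (t + L) (m-2)) * omegaq q ^ c := by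
    intro t
    rw [hds t, show G₂ (t + L) + q / 2 * bit (t + L) (m - 2)
        = q / 2 * (K2 m π g (t + L) + bit (t + L) (m-2)) + c by rw [e2]; ring]
    exact val _
  have hterm : ∀ A B : ℕ,
      ((-1 : ℂ) ^ A * omegaq q ^ c) * (starRingEnd ℂ) ((-1 : ℂ) ^ B * omegaq q ^ c)
        = (-1 : ℂ) ^ (A + B) := by
    intro A B
    have hc : (starRingEnd ℂ) ((-1 : ℂ) ^ B * omegaq q ^ c)
        = (-1 : ℂ) ^ B * (starRingEnd ℂ) (omegaq q ^ c) := by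
      rw [map_mul, map_pow, map_neg, map_one]
    rw [hc, pow_add]
    calc ((-1 : ℂ) ^ A * omegaq q ^ c) * ((-1 : ℂ) ^ B * (starRingEnd ℂ) (omegaq q ^ c))
        = ((-1 : ℂ) ^ A * (-1) ^ B) * (omegaq q ^ c * (starRingEnd ℂ) (omegaq q ^ c)) := by ring
      _ = (-1 : ℂ) ^ A * (-1) ^ B := by rw [hz, mul_one]
  -- reflection cancellation principle
  set N : ℕ := 2 ^ (m - 1) + 2 with hN
  intro τ
  set K : ℕ := N - τ with hK
  have cancel : ∀ F : ℕ → ℂ, (∀ i, i < K → F i + F (K - 1 - i) = 0)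
      → ∑ i ∈ Finset.range K, F i = 0 := by
    intro F h
    have h2 : (∑ i ∈ Finset.range K, F i) + ∑ i ∈ Finset.range K, F i = 0 := by
      nth_rewrite 2 [← Finset.sum_range_reflect]
      rw [← Finset.sum_add_distrib]
      exact Finset.sum_eq_zero fun i hi => h i (Finset.mem_range.mp hi)
    exact add_self_eq_zero.mp h2
  -- power facts for omega
  have p2 : 2 ^ m = 2 * 2 ^ (m - 1) := by rw [← pow_succ']; congr 1; omega
  have p1 : 2 ^ (m - 1) = 2 * 2 ^ (m - 2) := by rw [← pow_succ']; congr 1; omega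
  have p0 : 1 ≤ 2 ^ (m - 2) := Nat.one_le_two_pow
  -- the key pointwise fact, as needed for both conjuncts
  have main : ∀ i, i < K →
      ∃ j v u' v' : ℕ,
        (K - 1 - i) = u' - L ∧ j = i + L ∧ v = i + τ + L ∧ u' = (K - 1 - i) + L
        ∧ v' = (K - 1 - i) + τ + L
        ∧ j + v' = 2 ^ m - 1 ∧ v + u' = 2 ^ m - 1 := by
    intro i hi
    refine ⟨i + L, i + τ + L, (K - 1 - i) + L, (K - 1 - i) + τ + L, by omega, rfl, rfl, rfl, rfl,
      by omega, by omega⟩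
  constructor
  · -- first conjunct
    rw [show acorr N a cs τ + acorr N b ds τ
        = ∑ i ∈ Finset.range K, (a i * (starRingEnd ℂ) (cs (i + τ))
            + b i * (starRingEnd ℂ) (ds (i + τ))) by
      rw [acorr, acorr, ← Finset.sum_add_distrib]]
    apply cancel
    intro i hi
    obtain ⟨j, v, u', v', _, hj, hv, hu', hv', hc1, hc2⟩ := main i hi
    set i' := K - 1 - i with hi'
    rw [va i, va i', vb i, vb i', vcs (i + τ), vcs (i' + τ), vds (i + τ), vds (i' + τ)]
    rw [hterm, hterm, hterm, hterm]
    have hidx1 : i + τ + L = v := hv.symm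
    have hidx2 : i' + τ + L = v' := hv'.symm
    have hidx3 : i + L = j := hj.symm
    have hidx4 : i' + L = u' := hu'.symm
    rw [hidx1, hidx2, hidx3, hidx4]
    -- core instances
    have c1 := core m hm π hπ' g hg j v' hc1
    have c2 := core m hm π hπ' g hg v u' (by omega)
    have c3 := core m hm π hπ' g hg v' j (by omega)
    have c4 := core m hm π hπ' g hg u' v (by omega)
    have y1 : bit j (m - 2) + bit v' (m - 2) = 1 := bitc (m - 2) m j v' (by omega) hc1
    have y2 : bit v (m - 2) + bit u' (m - 2) = 1 := bitc (m - 2) m v u' (by omega) hc2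
    have s14 : (-1 : ℂ) ^ (K1 m π g j + (K1 m π g v + bit v (m - 2)))
        + (-1 : ℂ) ^ (K2 m π g u' + (K2 m π g v' + bit v' (m - 2))) = 0 := by
      apply sign_cancel
      omega
    have s23 : (-1 : ℂ) ^ (K2 m π g j + (K2 m π g v + bit v (m - 2)))
        + (-1 : ℂ) ^ (K1 m π g u' + (K1 m π g v' + bit v' (m - 2))) = 0 := by
      apply sign_cancel
      omega
    linear_combination s14 + s23
  · -- second conjunct
    rw [show acorr N cs a τ + acorr N ds b τ
        = ∑ i ∈ Finset.range K, (cs i * (starRingEnd ℂ) (a (i + τ))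
            + ds i * (starRingEnd ℂ) (b (i + τ))) by
      rw [acorr, acorr, ← Finset.sum_add_distrib]]
    apply cancel
    intro i hi
    obtain ⟨j, v, u', v', _, hj, hv, hu', hv', hc1, hc2⟩ := main i hi
    set i' := K - 1 - i with hi'
    rw [va (i + τ), va (i' + τ), vb (i + τ), vb (i' + τ), vcs i, vcs i', vds i, vds i']
    rw [hterm, hterm, hterm, hterm]
    have hidx1 : i + τ + L = v := hv.symm
    have hidx2 : i' + τ + L = v' := hv'.symm
    have hidx3 : i + L = j := hj.symm
    have hidx4 : i' + L = u' := hu'.symm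
    rw [hidx1, hidx2, hidx3, hidx4]
    have c1 := core m hm π hπ' g hg j v' hc1
    have c2 := core m hm π hπ' g hg v u' (by omega)
    have c3 := core m hm π hπ' g hg v' j (by omega)
    have c4 := core m hm π hπ' g hg u' v (by omega)
    have y1 : bit j (m - 2) + bit v' (m - 2) = 1 := bitc (m - 2) m j v' (by omega) hc1
    have y2 : bit v (m - 2) + bit u' (m - 2) = 1 := bitc (m - 2) m v u' (by omega) hc2
    have s14 : (-1 : ℂ) ^ (K1 m π g j + bit j (m - 2) + K1 m π g v)
        + (-1 : ℂ) ^ (K2 m π g u' + bit u' (m - 2) + K2 m π g v') = 0 := by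
      apply sign_cancel
      omega
    have s23 : (-1 : ℂ) ^ (K2 m π g j + bit j (m - 2) + K2 m π g v)
        + (-1 : ℂ) ^ (K1 m π g u' + bit u' (m - 2) + K1 m π g v') = 0 := by
      apply sign_cancel
      omega
    linear_combination s14 + s23
end

section
/- With a,b,c,d as in the paper's pair of CZCPs, C(a,d)(τ)+C(b,c)(τ)=0 for all shifts τ with 2^{m−1}−2^{π(m−3)} < τ ≤ 2^{m−1}+1. -/
open Finset Complex

lemma bit_of_div (a x n : ℕ) (h1 : a * 2 ^ n ≤ x) (h2 : x < (a + 1) * 2 ^ n) :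
    bit x n = a % 2 := by
  unfold bit
  rw [Nat.div_eq_of_lt_le h1 h2]

lemma bit_le_one (x n : ℕ) : bit x n ≤ 1 := by unfold bit; omega

lemma omegaq_half (q h : ℕ) (hq : q = 2 * h) (hh : 1 ≤ h) : omegaq q ^ h = -1 := by
  subst hq
  unfold omegaq
  rw [← Complex.exp_nat_mul]
  have hh0 : (h : ℂ) ≠ 0 := Nat.cast_ne_zero.mpr (by omega)
  have e : (h : ℂ) * (2 * Real.pi * Complex.I / ((2 * h : ℕ) : ℂ)) = Real.pi * Complex.I := by
    push_cast
    field_simp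
  rw [e, Complex.exp_pi_mul_I]

lemma neg_one_pow_add (u v : ℕ) (h : (u + v) % 2 = 1) : (-1 : ℂ) ^ u + (-1) ^ v = 0 := by
  rcases Nat.even_or_odd u with hu | hu
  · have hv : Odd v := Nat.odd_iff.mpr (by have := Nat.even_iff.mp hu; omega)
    rw [hu.neg_one_pow, hv.neg_one_pow]; ring
  · have hv : Even v := Nat.even_iff.mpr (by have := Nat.odd_iff.mp hu; omega)
    rw [hu.neg_one_pow, hv.neg_one_pow]; ring

/-- Lemma 4, eqn (13): C(a,d)(τ) + C(b,c)(τ) = 0 for all shifts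
2^{m−1} − 2^{π(m−3)} < τ ≤ 2^{m−1} + 1. -/
theorem stmt_8 (q m c : ℕ) (hq : 2 ≤ q) (hq2 : 2 ∣ q) (hm : 4 ≤ m)
    (π : ℕ → ℕ) (hπ : Set.BijOn π (Set.Iio (m - 2)) (Set.Iio (m - 2)))
    (g G G₁ G₂ : ℕ → ℕ)
    (hg : ∀ i, g i = ∑ k ∈ Finset.range (m - 3), bit i (π k) * bit i (π (k + 1)))
    (hG : ∀ i, G i = q / 2 * ((1 - bit i (m - 1)) * bit i (m - 2) * g i
        + bit i (m - 1) * (1 - bit i (m - 2)) * (g i + bit i (π 0) + (m - 2))) + c)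
    (hG₁ : ∀ i, G₁ i = G i + q / 2 * (bit i (m - 1) * bit i (m - 2)))
    (hG₂ : ∀ i, G₂ i = G i + q / 2 * (bit i (π (m - 3)) * (bit i (m - 1) + bit i (m - 2))))
    (a b cs ds : ℕ → ℂ)
    (ha : ∀ i, a i = omegaq q ^ G₁ (i + (2 ^ (m - 2) - 1)))
    (hb : ∀ i, b i = omegaq q ^ G₂ (i + (2 ^ (m - 2) - 1)))
    (hcs : ∀ i, cs i = omegaq q ^ (G₁ (i + (2 ^ (m - 2) - 1))
        + q / 2 * bit (i + (2 ^ (m - 2) - 1)) (m - 2)))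
    (hds : ∀ i, ds i = omegaq q ^ (G₂ (i + (2 ^ (m - 2) - 1))
        + q / 2 * bit (i + (2 ^ (m - 2) - 1)) (m - 2))) :
    ∀ τ : ℕ, 2 ^ (m - 1) - 2 ^ π (m - 3) < τ → τ ≤ 2 ^ (m - 1) + 1 →
      acorr (2 ^ (m - 1) + 2) a ds τ + acorr (2 ^ (m - 1) + 2) b cs τ = 0 := by
  intro τ hτ1 hτ2
  have hπm : π (m - 3) < m - 2 := hπ.mapsTo (by simp only [Set.mem_Iio]; omega)
  set p := π (m - 3) with hp
  obtain ⟨k, hk1, hk2⟩ : ∃ k, 1 ≤ k ∧ m - 2 = k + p := ⟨m - 2 - p, by omega, by omega⟩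
  set A := 2 ^ p with hA
  set B := 2 ^ k with hB
  have hB2 : 2 ≤ B := by
    calc 2 = 2 ^ 1 := rfl
    _ ≤ 2 ^ k := Nat.pow_le_pow_right (by norm_num) hk1
  have hBeven : B % 2 = 0 := by
    have h2 : 2 * 2 ^ (k - 1) = B := by
      rw [hB, ← pow_succ']
      congr 1
      omega
    omega
  have hC : 2 ^ (m - 2) = B * A := by rw [hA, hB, ← pow_add, hk2]
  set C := B * A with hCdef
  have hA1 : 1 ≤ A := Nat.one_le_two_pow
  have hAC : 2 * A ≤ C := Nat.mul_le_mul_right A hB2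
  have hm1 : 2 ^ (m - 1) = 2 * C := by
    have e : m - 1 = (m - 2) + 1 := by omega
    rw [e, pow_succ, hC]
    ring
  obtain ⟨h', hh'⟩ := hq2
  have hh1 : 1 ≤ h' := by omega
  have hqdiv : q / 2 = h' := by omega
  have hω : omegaq q ^ h' = -1 := omegaq_half q h' hh' hh1
  unfold acorr
  rw [← Finset.sum_add_distrib]
  apply Finset.sum_eq_zero
  intro i hi
  simp only [Finset.mem_range] at hi
  rw [hm1] at hi
  have hτlow : 2 * C - A < τ := by rw [hm1] at hτ1; exact hτ1
  have hτhigh : τ ≤ 2 * C + 1 := by rw [hm1] at hτ2; exact hτ2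
  have hiA : i ≤ A := by omega
  rw [ha i, hb i, hcs (i + τ), hds (i + τ)]
  set I := i + (2 ^ (m - 2) - 1) with hIdef
  set J := i + τ + (2 ^ (m - 2) - 1) with hJdef
  have hIC : I = i + (C - 1) := by rw [hIdef, hC]
  have hJC : J = i + τ + (C - 1) := by rw [hJdef, hC]
  have hCpos : 1 ≤ C := by omega
  -- bit facts
  have bI1 : bit I (m - 1) = 0 := by
    have e := bit_of_div 0 I (m - 1) (by omega) (by rw [hm1]; omega)
    simpa using e
  have bIprod : bit I p * bit I (m - 2) = 0 := by
    rcases Nat.eq_zero_or_pos i with h0 | h0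
    · have e : bit I (m - 2) = 0 := by
        have e := bit_of_div 0 I (m - 2) (by omega) (by rw [hC]; omega)
        simpa using e
      rw [e, mul_zero]
    · have e : bit I p = 0 := by
        have h1 : B * 2 ^ p ≤ I := by rw [← hA, ← hCdef]; omega
        have h2 : I < (B + 1) * 2 ^ p := by
          rw [← hA, add_mul, one_mul, ← hCdef]; omega
        have e := bit_of_div B I p h1 h2
        omega
      rw [e, zero_mul]
  have bJ1 : bit J (m - 1) = 1 := by
    have h1 : 1 * 2 ^ (m - 1) ≤ J := by rw [one_mul, hm1]; omega
    have h2 : J < (1 + 1) * 2 ^ (m - 1) := by rw [hm1]; omega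
    have e := bit_of_div 1 J (m - 1) h1 h2
    simpa using e
  have bkey : bit J (m - 2) = 0 → bit J p = 1 := by
    intro hb0
    rcases Nat.lt_or_ge J (3 * C) with hlt | hge
    · have e1 : (3 * B - 1) * 2 ^ p = 3 * C - A := by
        rw [← hA, Nat.sub_one_mul, mul_assoc, ← hCdef]
      have e2 : (3 * B - 1 + 1) * 2 ^ p = 3 * C := by
        rw [Nat.sub_add_cancel (by omega), ← hA, mul_assoc, ← hCdef]
      have h1 : (3 * B - 1) * 2 ^ p ≤ J := by rw [e1]; omega
      have h2 : J < (3 * B - 1 + 1) * 2 ^ p := by rw [e2]; omega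
      have e := bit_of_div (3 * B - 1) J p h1 h2
      rw [e]
      omega
    · have h1 : 3 * 2 ^ (m - 2) ≤ J := by rw [hC]; omega
      have h2 : J < (3 + 1) * 2 ^ (m - 2) := by rw [hC]; omega
      have e := bit_of_div 3 J (m - 2) h1 h2
      omega
  have hbp := bit_le_one J p
  have hb2 := bit_le_one J (m - 2)
  have hpar : (bit J p * (1 + bit J (m - 2)) + bit J (m - 2)) % 2 = 1 := by
    have h1 : bit J p = 0 ∨ bit J p = 1 := by omega
    have h2 : bit J (m - 2) = 0 ∨ bit J (m - 2) = 1 := by omega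
    rcases h1 with h1 | h1 <;> rcases h2 with h2 | h2 <;>
      first
        | exact absurd (bkey h2) (by omega)
        | simp [h1, h2]
  -- value equalities
  have eGI1 : G₁ I = G I := by rw [hG₁ I, bI1]; simp
  have eGI2 : G₂ I = G I := by
    rw [hG₂ I, bI1, zero_add, bIprod]
    simp
  have eGJ1 : G₁ J = G J + h' * bit J (m - 2) := by
    rw [hG₁ J, bJ1, one_mul, hqdiv]
  have eGJ2 : G₂ J = G J + h' * (bit J p * (1 + bit J (m - 2))) := by
    rw [hG₂ J, bJ1, hqdiv]
  rw [hqdiv, eGI1, eGI2, eGJ1, eGJ2]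
  rw [← mul_add, ← map_add]
  have hzero : omegaq q ^ (G J + h' * (bit J p * (1 + bit J (m - 2))) + h' * bit J (m - 2))
      + omegaq q ^ (G J + h' * bit J (m - 2) + h' * bit J (m - 2)) = 0 := by
    have e1 : G J + h' * (bit J p * (1 + bit J (m - 2))) + h' * bit J (m - 2)
        = (G J + h' * bit J (m - 2)) + h' * (bit J p * (1 + bit J (m - 2))) := by ring
    have t1 : omegaq q ^ (G J + h' * (bit J p * (1 + bit J (m - 2))) + h' * bit J (m - 2))
        = omegaq q ^ (G J + h' * bit J (m - 2)) * (-1) ^ (bit J p * (1 + bit J (m - 2))) := by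
      rw [e1, pow_add, pow_mul, hω]
    have t2 : omegaq q ^ (G J + h' * bit J (m - 2) + h' * bit J (m - 2))
        = omegaq q ^ (G J + h' * bit J (m - 2)) * (-1) ^ bit J (m - 2) := by
      rw [pow_add, pow_mul, hω]
    rw [t1, t2, ← mul_add, neg_one_pow_add _ _ hpar, mul_zero]
  rw [hzero]
  simp
end

section
/- Let (G₁,G₂) be an (N,Z)-CZCP. Fix t∈Z_2^n and order the 2^{n+1} sequences of S_t as S_{t,i}: first ω^{(q/2)t·y}G₁ for y=0,…,2^n−1 (y in binary), then ω^{(q/2)t·y}G₂ for y=0,…,2^n−1, cyclically. Then Σ_{i=1}^{2^{n+1}} C(S_{t,i}, S_{t,i+1})(τ) = 0 for all |τ|∈{N−Z,…,N−1} (indices mod 2^{n+1}). -/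
open Finset Complex

lemma acorr_smul (N : ℕ) (a b : ℂ) (x y : ℕ → ℂ) (τ : ℕ) :
    acorr N (fun j => a * x j) (fun j => b * y j) τ
      = a * (starRingEnd ℂ) b * acorr N x y τ := by
  unfold acorr
  rw [Finset.mul_sum]
  refine Finset.sum_congr rfl fun i _ => ?_
  simp only [map_mul]
  ring

/-- property P2: the cyclic consecutive cross-correlation sum over the
ordered set S_t vanishes on the tail-end zone. -/
theorem stmt_13 (q n N Z : ℕ) (hq : 2 ≤ q) (hq2 : 2 ∣ q)
    (G₁ G₂ : ℕ → ℂ)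
    (hP1 : ∀ τ : ℕ, (1 ≤ τ ∧ τ ≤ Z) ∨ (N - Z ≤ τ ∧ τ ≤ N - 1) →
      acorr N G₁ G₁ τ + acorr N G₂ G₂ τ = 0)
    (hP2 : ∀ τ : ℕ, N - Z ≤ τ → τ ≤ N - 1 →
      acorr N G₁ G₂ τ + acorr N G₂ G₁ τ = 0)
    (t : ℕ → ℕ) (ht : ∀ k, t k ≤ 1)
    (S : ℕ → ℕ → ℂ)
    (hS : ∀ i j, S i j =
      if i < 2 ^ n then
        omegaq q ^ (q / 2 * ∑ k ∈ Finset.range n, t k * bit i k) * G₁ j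
      else
        omegaq q ^ (q / 2 * ∑ k ∈ Finset.range n, t k * bit (i - 2 ^ n) k) * G₂ j) :
    ∀ τ : ℕ, N - Z ≤ τ → τ ≤ N - 1 →
      ∑ i ∈ Finset.range (2 ^ (n + 1)),
        acorr N (S i) (S ((i + 1) % 2 ^ (n + 1))) τ = 0 := by
  intro τ hτ1 hτ2
  set c : ℕ → ℂ := fun i => omegaq q ^ (q / 2 * ∑ k ∈ Finset.range n, t k * bit i k) with hc
  have hpos : 0 < 2 ^ n := Nat.pow_pos (by norm_num)
  have hSlt : ∀ i, i < 2 ^ n → S i = fun j => c i * G₁ j := by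
    intro i hi; funext j; rw [hS i j, if_pos hi]
  have hSge : ∀ i, ¬ i < 2 ^ n → S i = fun j => c (i - 2 ^ n) * G₂ j := by
    intro i hi; funext j; rw [hS i j, if_neg hi]
  have hc0 : c 0 = 1 := by
    have : ∀ k ∈ Finset.range n, t k * bit 0 k = 0 := by
      intro k _; simp [bit]
    simp [hc, Finset.sum_eq_zero this]
  have hpow : (2:ℕ) ^ (n + 1) = 2 ^ n + 2 ^ n := by ring
  rw [hpow, Finset.sum_range_add, ← Finset.sum_add_distrib]
  refine Finset.sum_eq_zero fun j hj => ?_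
  rw [Finset.mem_range] at hj
  have hj1 : j + 1 ≤ 2 ^ n := hj
  by_cases hlt : j + 1 < 2 ^ n
  · -- both successors stay within their halves
    have m1 : (j + 1) % (2 ^ n + 2 ^ n) = j + 1 :=
      Nat.mod_eq_of_lt (by omega)
    have m2 : (2 ^ n + j + 1) % (2 ^ n + 2 ^ n) = 2 ^ n + j + 1 :=
      Nat.mod_eq_of_lt (by omega)
    rw [m1, m2, hSlt j hj, hSlt (j + 1) hlt,
      hSge (2 ^ n + j) (by omega), hSge (2 ^ n + j + 1) (by omega)]
    have e1 : 2 ^ n + j - 2 ^ n = j := by omega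
    have e2 : 2 ^ n + j + 1 - 2 ^ n = j + 1 := by omega
    rw [e1, e2, acorr_smul, acorr_smul, ← mul_add]
    rw [hP1 τ (Or.inr ⟨hτ1, hτ2⟩), mul_zero]
  · -- j = 2^n - 1 : wrap-around terms
    have hje : j + 1 = 2 ^ n := by omega
    have m1 : (j + 1) % (2 ^ n + 2 ^ n) = 2 ^ n :=
      by rw [hje]; exact Nat.mod_eq_of_lt (by omega)
    have m2 : (2 ^ n + j + 1) % (2 ^ n + 2 ^ n) = 0 := by
      have : 2 ^ n + j + 1 = 2 ^ n + 2 ^ n := by omega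
      rw [this, Nat.mod_self]
    rw [m1, m2, hSlt j hj, hSge (2 ^ n) (by omega), hSge (2 ^ n + j) (by omega),
      hSlt 0 hpos]
    have e1 : 2 ^ n - 2 ^ n = 0 := by omega
    have e2 : 2 ^ n + j - 2 ^ n = j := by omega
    rw [e1, e2, acorr_smul, acorr_smul, hc0]
    rw [map_one, mul_one, ← mul_add, hP2 τ hτ1 hτ2, mul_zero]
end
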